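/- Assume Γ is unitrivalent, j ∈ QCG_k(Γ; j'), λ₁, λ₂ ∈ Z(Γ), λ₁·j = j and λ₂·j = j. Then Σ_{f ∈ Ex(λ₁ + λ₂)} j f − Σ_{f ∈ Ex(λ₁)} j f − Σ_{f ∈ Ex(λ₂)} j f ∈ 2ℤ. -/

import Mathlib

open scoped BigOperators

set_option linter.unusedSectionVars false
set_option linter.unreachableTactic false
set_option linter.unusedTactic false

variable {V E : Type*} [Fintype V] [Fintype E] [DecidableEq V] [DecidableEq E]

/-- The multiset of edge-ends at a vertex `v`: each edge `e` contributes one end for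
`s e = v` and one end for `t e = v`, so a loop at `v` contributes twice. -/
def endsAt (s t : E → V) (v : V) : Multiset E :=
  (Finset.univ.filter fun e => s e = v).val + (Finset.univ.filter fun e => t e = v).val

/-- The degree of a vertex (a loop counts twice). -/
def degree (s t : E → V) (v : V) : ℕ := Multiset.card (endsAt s t v)

/-- A graph is unitrivalent if every vertex has degree `1` or `3`. -/
def Unitrivalent (s t : E → V) : Prop := ∀ v, degree s t v = 1 ∨ degree s t v = 3

/-- The cycle space `Z(Γ)`: the `ZMod 2`-valued functions on edges whose total value over
the edge-ends at every vertex is `0`.  It plays the role of `H₁(Γ; ℤ/2)`. -/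
def cycleSpace (s t : E → V) : AddSubgroup (E → ZMod 2) where
  carrier := {x | ∀ v, ((endsAt s t v).map x).sum = 0}
  zero_mem' := by intro v; simp
  add_mem' := by
    intro a b ha hb v
    have h : ((endsAt s t v).map (a + b)).sum
        = ((endsAt s t v).map a).sum + ((endsAt s t v).map b).sum := by
      rw [show ((a + b : E → ZMod 2)) = fun e => a e + b e from rfl]
      rw [Multiset.sum_map_add]
    rw [h, ha v, hb v, add_zero]
  neg_mem' := by
    intro a ha v
    have h : (-a : E → ZMod 2) = a := funext fun e => by
      have h2 : ∀ x : ZMod 2, -x = x := by decide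
      exact h2 (a e)
    rw [h]; exact ha v

/-- A weight of level `k`: each edge gets a value in `{0, 1/2, 1, …, k/2}`. -/
def IsWeight (k : ℕ) (j : E → ℚ) : Prop := ∀ f, ∃ m : ℕ, m ≤ k ∧ j f = (m : ℚ) / 2

/-- The set `QCG_k(Γ; j')` of admissible weights of level `k` with boundary values `j'`:
weights agreeing with `j'` on edges with a univalent endpoint and satisfying the quantum
Clebsch–Gordan condition at every trivalent vertex (a loop contributes its weight twice;
the condition `2x ≤ a+b+c` for each of the three end-weights `x` is the triangle
inequality). -/
def QCG (s t : E → V) (k : ℕ) (j' : E → ℚ) : Set (E → ℚ) :=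
  {j | IsWeight k j ∧
    (∀ f, (degree s t (s f) = 1 ∨ degree s t (t f) = 1) → j f = j' f) ∧
    (∀ v, degree s t v = 3 →
      (∃ m : ℤ, ((endsAt s t v).map j).sum = (m : ℚ)) ∧
      (∀ x ∈ (endsAt s t v).map j, 2 * x ≤ ((endsAt s t v).map j).sum) ∧
      ((endsAt s t v).map j).sum ≤ (k : ℚ))}

/-- The action of a cycle `lam` on a weight `j`:
`(lam · j) f = k/2 - j f` if `lam f = 1` and `(lam · j) f = j f` otherwise. -/
def actW (k : ℕ) (lam : E → ZMod 2) (j : E → ℚ) : E → ℚ :=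
  fun f => if lam f = 1 then (k : ℚ) / 2 - j f else j f

theorem actW_zero (k : ℕ) (j : E → ℚ) : actW k (0 : E → ZMod 2) j = j := by
  funext f
  simp [actW]

theorem actW_add (k : ℕ) (l l' : E → ZMod 2) (j : E → ℚ) :
    actW k (l + l') j = actW k l (actW k l' j) := by
  funext f
  have h : ∀ x : ZMod 2, x = 0 ∨ x = 1 := by decide
  simp only [actW, Pi.add_apply]
  rcases h (l f) with h1 | h1 <;> rcases h (l' f) with h2 | h2 <;>
    simp [h1, h2] <;> ring

theorem add_self_zmod2 (l : E → ZMod 2) : l + l = 0 := by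
  funext f
  have h : ∀ x : ZMod 2, x + x = 0 := by decide
  exact h (l f)

/-- A vertex `v` lies on the cycle `lam` if some edge of `lam` has `v` as an endpoint. -/
def LiesOn (s t : E → V) (lam : E → ZMod 2) (v : V) : Prop :=
  ∃ e, lam e = 1 ∧ (s e = v ∨ t e = v)

/-- An edge `f` is `lam`-external if `lam` does not pass through `f` and exactly one of
its endpoints lies on `lam`. -/
def IsExternal (s t : E → V) (lam : E → ZMod 2) (f : E) : Prop :=
  lam f = 0 ∧ Xor' (LiesOn s t lam (s f)) (LiesOn s t lam (t f))

/-- `Ex(lam)`: the finite set of `lam`-external edges. -/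
noncomputable def Ex (s t : E → V) (lam : E → ZMod 2) : Finset E :=
  letI := Classical.decPred (IsExternal s t lam)
  Finset.univ.filter (IsExternal s t lam)

/-- A twisted 1-cocycle `δ : Z(Γ) → (QCG_k(Γ; j') → ℂˣ)` (encoded as a function on all of
`(E → ZMod 2) × (E → ℚ)`, constrained only on `Z(Γ) × QCG_k(Γ; j')`). -/
def IsCocycle (s t : E → V) (k : ℕ) (j' : E → ℚ)
    (δ : (E → ZMod 2) → (E → ℚ) → ℂˣ) : Prop :=
  ∀ lam ∈ cycleSpace s t, ∀ lam' ∈ cycleSpace s t, ∀ j ∈ QCG s t k j',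
    δ (lam + lam') j = δ lam (actW k lam' j) * δ lam' j

/-- A coboundary. -/
def IsCoboundary (s t : E → V) (k : ℕ) (j' : E → ℚ)
    (δ : (E → ZMod 2) → (E → ℚ) → ℂˣ) : Prop :=
  ∃ c : (E → ℚ) → ℂˣ, ∀ lam ∈ cycleSpace s t, ∀ j ∈ QCG s t k j',
    δ lam j = c (actW k lam j) * (c j)⁻¹

/-- The external edge condition. -/
def ExtCond (s t : E → V) (k : ℕ) (j' : E → ℚ)
    (δ : (E → ZMod 2) → (E → ℚ) → ℂˣ) : Prop :=
  ∀ lam ∈ cycleSpace s t, ∀ j ∈ QCG s t k j', actW k lam j = j →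
    (δ lam j : ℂ) =
      Complex.exp (Real.pi * Complex.I * ((∑ f ∈ Ex s t lam, j f : ℚ) : ℂ))


section AuxLemmas

open Finset
open scoped Classical

variable (s t : E → V)

lemma mem_endsAt {v : V} {e : E} : e ∈ endsAt s t v ↔ s e = v ∨ t e = v := by
  simp [endsAt]

/-- number of edge-ends at `v` satisfying a predicate -/
def cntP (p : E → Prop) [DecidablePred p] (v : V) : ℕ :=
  Multiset.card ((endsAt s t v).filter p)

lemma card_filter_eq_sum_map (M : Multiset E) (p : E → Prop) [DecidablePred p] :
    Multiset.card (M.filter p) = (M.map fun e => if p e then (1:ℕ) else 0).sum := by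
  induction M using Multiset.induction_on with
  | empty => simp
  | cons a M ih => by_cases h : p a <;> simp [h, ih, Nat.add_comm]

lemma cntP_le_degree (p : E → Prop) [DecidablePred p] (v : V) :
    cntP s t p v ≤ degree s t v :=
  Multiset.card_le_card (Multiset.filter_le _ _)

lemma cntP_mono {p q : E → Prop} [DecidablePred p] [DecidablePred q]
    (hpq : ∀ e, p e → q e) (v : V) :
    cntP s t p v ≤ cntP s t q v :=
  Multiset.card_le_card (Multiset.monotone_filter_right _ hpq)

lemma cnt_even {lam : E → ZMod 2} (hlam : lam ∈ cycleSpace s t) (v : V) :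
    2 ∣ cntP s t (fun e => lam e = 1) v := by
  have h0 : ((endsAt s t v).map lam).sum = 0 := hlam v
  have h1 : (endsAt s t v).map lam
      = (endsAt s t v).map (fun e => ((if lam e = 1 then (1:ℕ) else 0 : ℕ) : ZMod 2)) := by
    refine Multiset.map_congr rfl (fun e _ => ?_)
    have hx : ∀ x : ZMod 2, x = ((if x = 1 then (1:ℕ) else 0 : ℕ) : ZMod 2) := by decide
    exact hx (lam e)
  have h3 : ((endsAt s t v).map (fun e => ((if lam e = 1 then (1:ℕ) else 0 : ℕ) : ZMod 2))).sum
      = ((cntP s t (fun e => lam e = 1) v : ℕ) : ZMod 2) := by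
    unfold cntP
    rw [card_filter_eq_sum_map, Nat.cast_multiset_sum, Multiset.map_map]
    exact congrArg Multiset.sum (Multiset.map_congr rfl (fun e _ => rfl))
  have h4 : ((cntP s t (fun e => lam e = 1) v : ℕ) : ZMod 2) = 0 := by
    rw [← h3, ← h1, h0]
  exact (ZMod.natCast_eq_zero_iff _ 2).1 h4

lemma liesOn_iff {lam : E → ZMod 2} {v : V} :
    LiesOn s t lam v ↔ 0 < cntP s t (fun e => lam e = 1) v := by
  constructor
  · rintro ⟨e, he1, he2⟩
    refine Multiset.card_pos_iff_exists_mem.2 ⟨e, Multiset.mem_filter.2 ⟨?_, he1⟩⟩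
    exact (mem_endsAt s t).2 he2
  · intro h
    obtain ⟨e, he⟩ := Multiset.card_pos_iff_exists_mem.1 h
    obtain ⟨hm, h1⟩ := Multiset.mem_filter.1 he
    exact ⟨e, h1, (mem_endsAt s t).1 hm⟩

lemma not_liesOn_iff {lam : E → ZMod 2} {v : V} :
    ¬ LiesOn s t lam v ↔ cntP s t (fun e => lam e = 1) v = 0 := by
  rw [liesOn_iff]; omega

lemma cnt_eq_two (hut : Unitrivalent s t) {lam : E → ZMod 2}
    (hlam : lam ∈ cycleSpace s t) {v : V} (hv : LiesOn s t lam v) :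
    cntP s t (fun e => lam e = 1) v = 2 ∧ degree s t v = 3 := by
  have h1 := cnt_even s t hlam v
  have h2 := (liesOn_iff s t).1 hv
  have h3 := cntP_le_degree s t (fun e => lam e = 1) v
  have h4 := hut v
  omega

lemma fix_weight {k : ℕ} {lam : E → ZMod 2} {j : E → ℚ} (hfix : actW k lam j = j)
    {f : E} (hf : lam f = 1) : j f = (k : ℚ)/4 := by
  have h := congrFun hfix f
  simp only [actW, hf, if_pos] at h
  linarith

lemma half_k_int {k : ℕ} {lam : E → ZMod 2} {j : E → ℚ} (hw : IsWeight k j)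
    (hfix : actW k lam j = j) {e : E} (he : lam e = 1) :
    ∃ m : ℤ, (k:ℚ)/2 = m := by
  obtain ⟨m, _, hm⟩ := hw e
  have h4 : j e = (k:ℚ)/4 := fix_weight hfix he
  exact ⟨m, by push_cast; linarith [hm ▸ h4]⟩

lemma sum_map_filter (M : Multiset E) (p : E → Prop) [DecidablePred p] (f : E → ℚ) :
    ((M.filter p).map f).sum = (M.map fun e => if p e then f e else 0).sum := by
  induction M using Multiset.induction_on with
  | empty => simp
  | cons a M ih => by_cases h : p a <;> simp [h, ih]

/-- sum of `j` over the `lam = 0` ends at a vertex lying on `lam`. -/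
lemma filterNot_sum (hut : Unitrivalent s t) {k : ℕ} {lam : E → ZMod 2} {j : E → ℚ}
    (hlam : lam ∈ cycleSpace s t) (hfix : actW k lam j = j)
    {v : V} (hv : LiesOn s t lam v) :
    (((endsAt s t v).filter (fun e => ¬ lam e = 1)).map j).sum
      = ((endsAt s t v).map j).sum - (k:ℚ)/2 := by
  have hM := Multiset.filter_add_not (fun e => lam e = 1) (endsAt s t v)
  have split : ((endsAt s t v).map j).sum
      = (((endsAt s t v).filter (fun e => lam e = 1)).map j).sum
        + (((endsAt s t v).filter (fun e => ¬ lam e = 1)).map j).sum := by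
    conv_lhs => rw [← hM]
    rw [Multiset.map_add, Multiset.sum_add]
  have hcard : Multiset.card ((endsAt s t v).filter (fun e => lam e = 1)) = 2 := by
    have := (cnt_eq_two s t hut hlam hv).1
    unfold cntP at this
    exact this
  have hone : (((endsAt s t v).filter (fun e => lam e = 1)).map j).sum = (k:ℚ)/2 := by
    have hmc : ((endsAt s t v).filter (fun e => lam e = 1)).map j
        = Multiset.replicate 2 ((k:ℚ)/4) := by
      rw [show ((endsAt s t v).filter (fun e => lam e = 1)).map j
          = ((endsAt s t v).filter (fun e => lam e = 1)).map (fun _ => (k:ℚ)/4) from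
        Multiset.map_congr rfl (fun e he => fix_weight hfix (Multiset.mem_filter.1 he).2)]
      rw [Multiset.map_const', hcard]
    rw [hmc, Multiset.sum_replicate]
    push_cast
    ring
  rw [split, hone]
  ring

lemma chord_weight_int (hut : Unitrivalent s t) {k : ℕ} {j' j : E → ℚ} {lam : E → ZMod 2}
    (hj : j ∈ QCG s t k j') (hlam : lam ∈ cycleSpace s t) (hfix : actW k lam j = j)
    {f : E} (h0 : lam f = 0) (hs : LiesOn s t lam (s f)) : ∃ m : ℤ, j f = m := by
  obtain ⟨hc2, hd3⟩ := cnt_eq_two s t hut hlam hs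
  have hcards : Multiset.card ((endsAt s t (s f)).filter (fun e => lam e = 1))
      + Multiset.card ((endsAt s t (s f)).filter (fun e => ¬ lam e = 1))
      = degree s t (s f) := by
    rw [degree, ← Multiset.card_add, Multiset.filter_add_not]
  have hcard1 : Multiset.card ((endsAt s t (s f)).filter (fun e => ¬ lam e = 1)) = 1 := by
    unfold cntP at hc2
    omega
  obtain ⟨a, ha⟩ := Multiset.card_eq_one.1 hcard1
  have hfmem : f ∈ (endsAt s t (s f)).filter (fun e => ¬ lam e = 1) := by
    refine Multiset.mem_filter.2 ⟨(mem_endsAt s t).2 (Or.inl rfl), ?_⟩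
    rw [h0]; decide
  have hfa : f = a := by rw [ha] at hfmem; simpa using hfmem
  have hsum := filterNot_sum s t hut hlam hfix hs
  rw [ha, ← hfa] at hsum
  simp at hsum
  obtain ⟨mS, hmS⟩ := (hj.2.2 (s f) hd3).1
  obtain ⟨e, he1, _⟩ := hs
  obtain ⟨mk, hmk⟩ := half_k_int hj.1 hfix he1
  exact ⟨mS - mk, by push_cast; rw [hsum, hmS, hmk]⟩

lemma sum_fiber {α : Type*} [AddCommMonoid α] (W : Finset V) (g : E → V) (h : E → α) :
    ∑ v ∈ W, ∑ e ∈ univ.filter (fun e => g e = v), h e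
      = ∑ e ∈ univ.filter (fun e => g e ∈ W), h e := by
  rw [Finset.sum_filter]
  rw [Finset.sum_congr rfl (fun v (_ : v ∈ W) => Finset.sum_filter (fun e => g e = v) h)]
  rw [Finset.sum_comm]
  refine Finset.sum_congr rfl (fun e _ => ?_)
  exact Finset.sum_ite_eq W (g e) (fun _ => h e)

lemma endsAt_map_sum {α : Type*} [AddCommMonoid α] (f : E → α) (v : V) :
    ((endsAt s t v).map f).sum
      = (∑ e ∈ univ.filter (fun e => s e = v), f e)
        + (∑ e ∈ univ.filter (fun e => t e = v), f e) := by
  rw [endsAt, Multiset.map_add, Multiset.sum_add]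
  rfl

/-- Main counting lemma: the sum of weights over external edges equals the vertex sum
minus twice the chord sum. -/
lemma ex_sum_eq (hut : Unitrivalent s t) {k : ℕ} {j' j : E → ℚ} {lam : E → ZMod 2}
    (hj : j ∈ QCG s t k j') (hlam : lam ∈ cycleSpace s t) (hfix : actW k lam j = j) :
    ∑ f ∈ Ex s t lam, j f
      = (∑ v ∈ univ.filter (LiesOn s t lam), (((endsAt s t v).map j).sum - (k:ℚ)/2))
        - 2 * ∑ f ∈ univ.filter
            (fun f => lam f = 0 ∧ LiesOn s t lam (s f) ∧ LiesOn s t lam (t f)), j f := by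
  have hh : ∀ v ∈ univ.filter (LiesOn s t lam),
      ((endsAt s t v).map j).sum - (k:ℚ)/2
        = ((endsAt s t v).map (fun e => if lam e = 1 then 0 else j e)).sum := by
    intro v hv
    rw [← filterNot_sum s t hut hlam hfix (Finset.mem_filter.1 hv).2]
    rw [sum_map_filter]
    refine congrArg _ (Multiset.map_congr rfl (fun e _ => ?_))
    by_cases h : lam e = 1 <;> simp [h]
  rw [Finset.sum_congr rfl hh]
  have hh2 : ∀ v ∈ univ.filter (LiesOn s t lam),
      ((endsAt s t v).map (fun e => if lam e = 1 then 0 else j e)).sum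
        = (∑ e ∈ univ.filter (fun e => s e = v), (if lam e = 1 then 0 else j e))
          + (∑ e ∈ univ.filter (fun e => t e = v), (if lam e = 1 then 0 else j e)) :=
    fun v _ => endsAt_map_sum s t _ v
  rw [Finset.sum_congr rfl hh2, Finset.sum_add_distrib,
    sum_fiber (univ.filter (LiesOn s t lam)) s (fun e => if lam e = 1 then 0 else j e),
    sum_fiber (univ.filter (LiesOn s t lam)) t (fun e => if lam e = 1 then 0 else j e)]
  have hfs : ∀ (g : E → V), univ.filter (fun e => g e ∈ univ.filter (LiesOn s t lam))
      = univ.filter (fun e => LiesOn s t lam (g e)) := by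
    intro g; apply Finset.filter_congr; intro e _; simp
  rw [hfs s, hfs t]
  rw [Finset.sum_filter (fun e => LiesOn s t lam (s e)) (fun e => if lam e = 1 then 0 else j e),
    Finset.sum_filter (fun e => LiesOn s t lam (t e)) (fun e => if lam e = 1 then 0 else j e),
    Finset.sum_filter (fun f => lam f = 0 ∧ LiesOn s t lam (s f) ∧ LiesOn s t lam (t f)) j,
    show Ex s t lam = Finset.univ.filter (IsExternal s t lam) from
      Finset.filter_congr_decidable _ _ _,
    Finset.sum_filter (IsExternal s t lam) j,
    Finset.mul_sum, ← Finset.sum_add_distrib, ← Finset.sum_sub_distrib]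
  refine Finset.sum_congr rfl (fun e _ => ?_)
  by_cases h1 : lam e = 1
  · have hne : ¬ IsExternal s t lam e := by
      intro hc
      rw [hc.1] at h1
      exact absurd h1 (by decide)
    have hnc : ¬ (lam e = 0 ∧ LiesOn s t lam (s e) ∧ LiesOn s t lam (t e)) := by
      rintro ⟨hc, -⟩
      rw [hc] at h1
      exact absurd h1 (by decide)
    simp [h1, hne, hnc]
  · have h0 : lam e = 0 := by
      have hx : ∀ x : ZMod 2, x ≠ 1 → x = 0 := by decide
      exact hx _ h1
    by_cases hs' : LiesOn s t lam (s e) <;> by_cases ht' : LiesOn s t lam (t e) <;>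
      simp [IsExternal, Xor', h0, h1, hs', ht'] <;> ring

lemma cnt_add_identity (lam₁ lam₂ : E → ZMod 2) (v : V) :
    cntP s t (fun e => (lam₁ + lam₂) e = 1) v
      + 2 * cntP s t (fun e => lam₁ e = 1 ∧ lam₂ e = 1) v
      = cntP s t (fun e => lam₁ e = 1) v + cntP s t (fun e => lam₂ e = 1) v := by
  simp only [cntP, card_filter_eq_sum_map]
  rw [← Multiset.sum_map_mul_left, ← Multiset.sum_map_add, ← Multiset.sum_map_add]
  refine congrArg _ (Multiset.map_congr rfl (fun e _ => ?_))
  have hx : ∀ a b : ZMod 2, ((if a + b = 1 then (1:ℕ) else 0)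
      + 2 * (if a = 1 ∧ b = 1 then (1:ℕ) else 0))
      = (if a = 1 then (1:ℕ) else 0) + (if b = 1 then (1:ℕ) else 0) := by decide
  exact hx (lam₁ e) (lam₂ e)

lemma cnt_union_identity (lam₁ lam₂ : E → ZMod 2) (v : V) :
    cntP s t (fun e => lam₁ e = 1 ∨ lam₂ e = 1) v
      + cntP s t (fun e => lam₁ e = 1 ∧ lam₂ e = 1) v
      = cntP s t (fun e => lam₁ e = 1) v + cntP s t (fun e => lam₂ e = 1) v := by
  simp only [cntP, card_filter_eq_sum_map]
  rw [← Multiset.sum_map_add, ← Multiset.sum_map_add]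
  refine congrArg _ (Multiset.map_congr rfl (fun e _ => ?_))
  have hx : ∀ a b : ZMod 2, ((if a = 1 ∨ b = 1 then (1:ℕ) else 0)
      + (if a = 1 ∧ b = 1 then (1:ℕ) else 0))
      = (if a = 1 then (1:ℕ) else 0) + (if b = 1 then (1:ℕ) else 0) := by decide
  exact hx (lam₁ e) (lam₂ e)

lemma cntP_total (p : E → Prop) [DecidablePred p] :
    ∑ v : V, cntP s t p v = 2 * (univ.filter p).card := by
  have h1 : ∀ v : V, cntP s t p v
      = (∑ e ∈ univ.filter (fun e => s e = v), (if p e then (1:ℕ) else 0))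
        + (∑ e ∈ univ.filter (fun e => t e = v), (if p e then (1:ℕ) else 0)) := by
    intro v
    rw [cntP, card_filter_eq_sum_map]
    exact endsAt_map_sum s t _ v
  rw [Finset.sum_congr rfl (fun v _ => h1 v), Finset.sum_add_distrib,
    sum_fiber univ s (fun e => if p e then (1:ℕ) else 0),
    sum_fiber univ t (fun e => if p e then (1:ℕ) else 0)]
  have h2 : ∀ g : E → V, univ.filter (fun e => g e ∈ (univ : Finset V)) = univ := by
    intro g; simp
  rw [h2 s, h2 t, Finset.card_filter]
  ring

/-- at a vertex where the two cycles share exactly one end, all three ends have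
weight `k/4`. -/
lemma fourb_S (hut : Unitrivalent s t) {k : ℕ} {j : E → ℚ} {lam₁ lam₂ : E → ZMod 2}
    (hlam₁ : lam₁ ∈ cycleSpace s t) (hlam₂ : lam₂ ∈ cycleSpace s t)
    (hfix₁ : actW k lam₁ j = j) (hfix₂ : actW k lam₂ j = j) {v : V}
    (hcc : cntP s t (fun e => lam₁ e = 1 ∧ lam₂ e = 1) v = 1) :
    ((endsAt s t v).map j).sum = 3 * ((k:ℚ)/4)
      ∧ LiesOn s t lam₁ v ∧ LiesOn s t lam₂ v ∧ degree s t v = 3 := by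
  have hv1 : LiesOn s t lam₁ v := by
    rw [liesOn_iff]
    have := cntP_mono s t (fun e (h : lam₁ e = 1 ∧ lam₂ e = 1) => h.1) v
    omega
  have hv2 : LiesOn s t lam₂ v := by
    rw [liesOn_iff]
    have := cntP_mono s t (fun e (h : lam₁ e = 1 ∧ lam₂ e = 1) => h.2) v
    omega
  obtain ⟨hc1, hd3⟩ := cnt_eq_two s t hut hlam₁ hv1
  obtain ⟨hc2, -⟩ := cnt_eq_two s t hut hlam₂ hv2
  have hun := cnt_union_identity s t lam₁ lam₂ v
  have hcu : cntP s t (fun e => lam₁ e = 1 ∨ lam₂ e = 1) v = 3 := by omega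
  have hall : (endsAt s t v).filter (fun e => lam₁ e = 1 ∨ lam₂ e = 1) = endsAt s t v := by
    refine Multiset.eq_of_le_of_card_le (Multiset.filter_le _ _) ?_
    rw [show Multiset.card ((endsAt s t v).filter (fun e => lam₁ e = 1 ∨ lam₂ e = 1)) = 3
      from hcu]
    rw [show Multiset.card (endsAt s t v) = 3 from hd3]
  have hmem : ∀ e ∈ endsAt s t v, lam₁ e = 1 ∨ lam₂ e = 1 := by
    intro e he
    have := Multiset.filter_eq_self.1 hall e he
    exact this
  have hmap : (endsAt s t v).map j = Multiset.replicate 3 ((k:ℚ)/4) := by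
    rw [show (endsAt s t v).map j = (endsAt s t v).map (fun _ => (k:ℚ)/4) from
      Multiset.map_congr rfl (fun e he => by
        rcases hmem e he with h | h
        · exact fix_weight hfix₁ h
        · exact fix_weight hfix₂ h)]
    rw [Multiset.map_const']
    rw [show Multiset.card (endsAt s t v) = 3 from hd3]
  refine ⟨?_, hv1, hv2, hd3⟩
  rw [hmap, Multiset.sum_replicate]
  push_cast
  ring

lemma liesOn_add_subset {lam₁ lam₂ : E → ZMod 2} {v : V}
    (h : LiesOn s t (lam₁ + lam₂) v) : LiesOn s t lam₁ v ∨ LiesOn s t lam₂ v := by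
  obtain ⟨e, he1, he2⟩ := h
  have hx : ∀ a b : ZMod 2, a + b = 1 → a = 1 ∨ b = 1 := by decide
  rcases hx (lam₁ e) (lam₂ e) he1 with h | h
  · exact Or.inl ⟨e, h, he2⟩
  · exact Or.inr ⟨e, h, he2⟩

/-- per-vertex contribution analysis -/
lemma vertex_contrib (hut : Unitrivalent s t) {k : ℕ} {j' j : E → ℚ}
    (hj : j ∈ QCG s t k j') {lam₁ lam₂ : E → ZMod 2}
    (hlam₁ : lam₁ ∈ cycleSpace s t) (hlam₂ : lam₂ ∈ cycleSpace s t)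
    (hfix₁ : actW k lam₁ j = j) (hfix₂ : actW k lam₂ j = j) (v : V) :
    ∃ m : ℤ,
      ((if LiesOn s t lam₁ v then (1:ℚ) else 0) + (if LiesOn s t lam₂ v then (1:ℚ) else 0)
        - (if LiesOn s t (lam₁ + lam₂) v then (1:ℚ) else 0))
        * (((endsAt s t v).map j).sum - (k:ℚ)/2)
      = (if cntP s t (fun e => lam₁ e = 1 ∧ lam₂ e = 1) v = 1 then (k:ℚ)/4 else 0)
        + 2 * m := by
  have hid := cnt_add_identity s t lam₁ lam₂ v
  by_cases hv1 : LiesOn s t lam₁ v <;> by_cases hv2 : LiesOn s t lam₂ v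
  · -- both
    obtain ⟨hc1, hd3⟩ := cnt_eq_two s t hut hlam₁ hv1
    obtain ⟨hc2, -⟩ := cnt_eq_two s t hut hlam₂ hv2
    have hc12le : cntP s t (fun e => (lam₁ + lam₂) e = 1) v ≤ 3 := by
      have := cntP_le_degree s t (fun e => (lam₁ + lam₂) e = 1) v
      omega
    have hccle : cntP s t (fun e => lam₁ e = 1 ∧ lam₂ e = 1) v ≤ 2 := by
      have := cntP_mono s t (fun e (h : lam₁ e = 1 ∧ lam₂ e = 1) => h.1) v
      omega
    have hccge : 1 ≤ cntP s t (fun e => lam₁ e = 1 ∧ lam₂ e = 1) v := by omega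
    by_cases hcc : cntP s t (fun e => lam₁ e = 1 ∧ lam₂ e = 1) v = 1
    · -- crossing vertex
      have hv12 : LiesOn s t (lam₁ + lam₂) v := by
        rw [liesOn_iff]; omega
      obtain ⟨hS, -⟩ := fourb_S s t hut hlam₁ hlam₂ hfix₁ hfix₂ hcc
      refine ⟨0, ?_⟩
      rw [if_pos hv1, if_pos hv2, if_pos hv12, if_pos hcc, hS]
      ring
    · -- shared pair of ends
      have hcc2 : cntP s t (fun e => lam₁ e = 1 ∧ lam₂ e = 1) v = 2 := by omega
      have hv12 : ¬ LiesOn s t (lam₁ + lam₂) v := by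
        rw [not_liesOn_iff]; omega
      obtain ⟨mS, hmS⟩ := (hj.2.2 v hd3).1
      obtain ⟨e, he1, -⟩ := id hv1
      obtain ⟨mk, hmk⟩ := half_k_int hj.1 hfix₁ he1
      refine ⟨mS - mk, ?_⟩
      rw [if_pos hv1, if_pos hv2, if_neg hv12, if_neg hcc, hmS, hmk]
      push_cast
      ring
  · -- only lam₁
    obtain ⟨hc1, -⟩ := cnt_eq_two s t hut hlam₁ hv1
    have hc2 : cntP s t (fun e => lam₂ e = 1) v = 0 := (not_liesOn_iff s t).1 hv2
    have hcc : cntP s t (fun e => lam₁ e = 1 ∧ lam₂ e = 1) v = 0 := by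
      have := cntP_mono s t (fun e (h : lam₁ e = 1 ∧ lam₂ e = 1) => h.2) v
      omega
    have hv12 : LiesOn s t (lam₁ + lam₂) v := by rw [liesOn_iff]; omega
    refine ⟨0, ?_⟩
    rw [if_pos hv1, if_neg hv2, if_pos hv12, if_neg (by omega : ¬ cntP s t
      (fun e => lam₁ e = 1 ∧ lam₂ e = 1) v = 1)]
    ring
  · -- only lam₂
    obtain ⟨hc2, -⟩ := cnt_eq_two s t hut hlam₂ hv2
    have hc1 : cntP s t (fun e => lam₁ e = 1) v = 0 := (not_liesOn_iff s t).1 hv1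
    have hcc : cntP s t (fun e => lam₁ e = 1 ∧ lam₂ e = 1) v = 0 := by
      have := cntP_mono s t (fun e (h : lam₁ e = 1 ∧ lam₂ e = 1) => h.1) v
      omega
    have hv12 : LiesOn s t (lam₁ + lam₂) v := by rw [liesOn_iff]; omega
    refine ⟨0, ?_⟩
    rw [if_neg hv1, if_pos hv2, if_pos hv12, if_neg (by omega : ¬ cntP s t
      (fun e => lam₁ e = 1 ∧ lam₂ e = 1) v = 1)]
    ring
  · -- neither
    have hv12 : ¬ LiesOn s t (lam₁ + lam₂) v := by
      intro h
      rcases liesOn_add_subset s t h with h | h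
      · exact hv1 h
      · exact hv2 h
    have hc1 : cntP s t (fun e => lam₁ e = 1) v = 0 := (not_liesOn_iff s t).1 hv1
    have hcc : cntP s t (fun e => lam₁ e = 1 ∧ lam₂ e = 1) v = 0 := by
      have := cntP_mono s t (fun e (h : lam₁ e = 1 ∧ lam₂ e = 1) => h.1) v
      omega
    refine ⟨0, ?_⟩
    rw [if_neg hv1, if_neg hv2, if_neg hv12, if_neg (by omega : ¬ cntP s t
      (fun e => lam₁ e = 1 ∧ lam₂ e = 1) v = 1)]
    ring

lemma card_B_even (hut : Unitrivalent s t) {lam₁ : E → ZMod 2} (lam₂ : E → ZMod 2)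
    (hlam₁ : lam₁ ∈ cycleSpace s t) :
    2 ∣ (univ.filter (fun v => cntP s t (fun e => lam₁ e = 1 ∧ lam₂ e = 1) v = 1)).card := by
  have htot : ∑ v : V, cntP s t (fun e => lam₁ e = 1 ∧ lam₂ e = 1) v
      = 2 * (univ.filter (fun e => lam₁ e = 1 ∧ lam₂ e = 1)).card :=
    cntP_total s t (fun e => lam₁ e = 1 ∧ lam₂ e = 1)
  have hsplit := Finset.sum_filter_add_sum_filter_not univ
    (fun v => cntP s t (fun e => lam₁ e = 1 ∧ lam₂ e = 1) v = 1)
    (cntP s t (fun e => lam₁ e = 1 ∧ lam₂ e = 1))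
  have hB : ∑ v ∈ univ.filter (fun v => cntP s t (fun e => lam₁ e = 1 ∧ lam₂ e = 1) v = 1),
        cntP s t (fun e => lam₁ e = 1 ∧ lam₂ e = 1) v
      = (univ.filter (fun v => cntP s t (fun e => lam₁ e = 1 ∧ lam₂ e = 1) v = 1)).card := by
    rw [Finset.sum_congr rfl (fun v hv => (Finset.mem_filter.1 hv).2), Finset.sum_const,
      smul_eq_mul, mul_one]
  have hnotB : 2 ∣ ∑ v ∈ univ.filter
        (fun v => ¬ cntP s t (fun e => lam₁ e = 1 ∧ lam₂ e = 1) v = 1),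
        cntP s t (fun e => lam₁ e = 1 ∧ lam₂ e = 1) v := by
    refine Finset.dvd_sum (fun v hv => ?_)
    have hne := (Finset.mem_filter.1 hv).2
    have h1 := cnt_even s t hlam₁ v
    have h2 := cntP_mono s t (fun e (h : lam₁ e = 1 ∧ lam₂ e = 1) => h.1) v
    have h3 := cntP_le_degree s t (fun e => lam₁ e = 1) v
    have h4 := hut v
    omega
  omega

lemma exists_int_sum {α : Type*} (u : Finset α) (f g : α → ℚ)
    (h : ∀ x ∈ u, ∃ m : ℤ, f x = g x + 2*m) :
    ∃ m : ℤ, ∑ x ∈ u, f x = (∑ x ∈ u, g x) + 2*m := by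
  induction u using Finset.induction_on with
  | empty => exact ⟨0, by simp⟩
  | insert _ _ hx ih =>
    obtain ⟨M, hM⟩ := ih (fun x hxu => h x (Finset.mem_insert_of_mem hxu))
    obtain ⟨m, hm⟩ := h _ (Finset.mem_insert_self _ _)
    exact ⟨m + M, by rw [Finset.sum_insert hx, Finset.sum_insert hx, hm, hM]; push_cast; ring⟩

lemma exists_int_sum' {α : Type*} (u : Finset α) (f : α → ℚ)
    (h : ∀ x ∈ u, ∃ m : ℤ, f x = m) :
    ∃ m : ℤ, ∑ x ∈ u, f x = m := by
  induction u using Finset.induction_on with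
  | empty => exact ⟨0, by simp⟩
  | insert _ _ hx ih =>
    obtain ⟨M, hM⟩ := ih (fun x hxu => h x (Finset.mem_insert_of_mem hxu))
    obtain ⟨m, hm⟩ := h _ (Finset.mem_insert_self _ _)
    exact ⟨m + M, by rw [Finset.sum_insert hx, hm, hM]; push_cast; ring⟩

end AuxLemmas

/-- if `lam₁ · j = j` and `lam₂ · j = j` then
`Σ_{f ∈ Ex(lam₁ + lam₂)} j f − Σ_{f ∈ Ex(lam₁)} j f − Σ_{f ∈ Ex(lam₂)} j f ∈ 2ℤ`. -/
theorem external_sum_additive_mod_two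
    (s t : E → V) (k : ℕ) (j' : E → ℚ)
    (hut : Unitrivalent s t) (hk : 0 < k)
    (j : E → ℚ) (hj : j ∈ QCG s t k j')
    (lam₁ : E → ZMod 2) (hlam₁ : lam₁ ∈ cycleSpace s t)
    (lam₂ : E → ZMod 2) (hlam₂ : lam₂ ∈ cycleSpace s t)
    (hfix₁ : actW k lam₁ j = j) (hfix₂ : actW k lam₂ j = j) :
    ∃ m : ℤ, (∑ f ∈ Ex s t (lam₁ + lam₂), j f)
        - (∑ f ∈ Ex s t lam₁, j f) - (∑ f ∈ Ex s t lam₂, j f) = 2 * (m : ℚ) := by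
  classical
  have hlam₁₂ : lam₁ + lam₂ ∈ cycleSpace s t := add_mem hlam₁ hlam₂
  have hfix₁₂ : actW k (lam₁ + lam₂) j = j := by
    rw [actW_add, hfix₂, hfix₁]
  have hE1 := ex_sum_eq s t hut hj hlam₁ hfix₁
  have hE2 := ex_sum_eq s t hut hj hlam₂ hfix₂
  have hE12 := ex_sum_eq s t hut hj hlam₁₂ hfix₁₂
  -- the chord sums are integers
  obtain ⟨C1, hC1⟩ := exists_int_sum' (Finset.univ.filter
      (fun f => lam₁ f = 0 ∧ LiesOn s t lam₁ (s f) ∧ LiesOn s t lam₁ (t f))) j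
    (fun f hf => by
      obtain ⟨-, h0, hs', -⟩ := Finset.mem_filter.1 hf
      exact chord_weight_int s t hut hj hlam₁ hfix₁ h0 hs')
  obtain ⟨C2, hC2⟩ := exists_int_sum' (Finset.univ.filter
      (fun f => lam₂ f = 0 ∧ LiesOn s t lam₂ (s f) ∧ LiesOn s t lam₂ (t f))) j
    (fun f hf => by
      obtain ⟨-, h0, hs', -⟩ := Finset.mem_filter.1 hf
      exact chord_weight_int s t hut hj hlam₂ hfix₂ h0 hs')
  obtain ⟨C12, hC12⟩ := exists_int_sum' (Finset.univ.filter
      (fun f => (lam₁ + lam₂) f = 0 ∧ LiesOn s t (lam₁ + lam₂) (s f)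
        ∧ LiesOn s t (lam₁ + lam₂) (t f))) j
    (fun f hf => by
      obtain ⟨-, h0, hs', -⟩ := Finset.mem_filter.1 hf
      exact chord_weight_int s t hut hj hlam₁₂ hfix₁₂ h0 hs')
  -- vertex sums as sums over all vertices with indicator coefficients
  have hVS : ∀ lam : E → ZMod 2,
      ∑ v ∈ Finset.univ.filter (LiesOn s t lam), (((endsAt s t v).map j).sum - (k:ℚ)/2)
        = ∑ v : V, (if LiesOn s t lam v then (1:ℚ) else 0)
            * (((endsAt s t v).map j).sum - (k:ℚ)/2) := by
    intro lam
    rw [Finset.sum_filter]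
    exact Finset.sum_congr rfl (fun v _ => by by_cases h : LiesOn s t lam v <;> simp [h])
  have hcombine :
      (∑ v ∈ Finset.univ.filter (LiesOn s t lam₁), (((endsAt s t v).map j).sum - (k:ℚ)/2))
      + (∑ v ∈ Finset.univ.filter (LiesOn s t lam₂), (((endsAt s t v).map j).sum - (k:ℚ)/2))
      - (∑ v ∈ Finset.univ.filter (LiesOn s t (lam₁ + lam₂)),
          (((endsAt s t v).map j).sum - (k:ℚ)/2))
      = ∑ v : V, ((if LiesOn s t lam₁ v then (1:ℚ) else 0)
          + (if LiesOn s t lam₂ v then (1:ℚ) else 0)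
          - (if LiesOn s t (lam₁ + lam₂) v then (1:ℚ) else 0))
          * (((endsAt s t v).map j).sum - (k:ℚ)/2) := by
    rw [hVS lam₁, hVS lam₂, hVS (lam₁ + lam₂), ← Finset.sum_add_distrib,
      ← Finset.sum_sub_distrib]
    exact Finset.sum_congr rfl (fun v _ => by ring)
  obtain ⟨M, hM⟩ := exists_int_sum Finset.univ
    (fun v => ((if LiesOn s t lam₁ v then (1:ℚ) else 0)
          + (if LiesOn s t lam₂ v then (1:ℚ) else 0)
          - (if LiesOn s t (lam₁ + lam₂) v then (1:ℚ) else 0))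
          * (((endsAt s t v).map j).sum - (k:ℚ)/2))
    (fun v => if cntP s t (fun e => lam₁ e = 1 ∧ lam₂ e = 1) v = 1 then (k:ℚ)/4 else 0)
    (fun v _ => vertex_contrib s t hut hj hlam₁ hlam₂ hfix₁ hfix₂ v)
  have hBsum : ∑ v : V, (if cntP s t (fun e => lam₁ e = 1 ∧ lam₂ e = 1) v = 1
        then (k:ℚ)/4 else 0)
      = ((Finset.univ.filter
          (fun v => cntP s t (fun e => lam₁ e = 1 ∧ lam₂ e = 1) v = 1)).card : ℚ)
        * ((k:ℚ)/4) := by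
    rw [← Finset.sum_filter, Finset.sum_const, nsmul_eq_mul]
  obtain ⟨r, hr⟩ := card_B_even s t hut lam₂ hlam₁
  have hBval : ∃ q : ℤ,
      ((Finset.univ.filter
          (fun v => cntP s t (fun e => lam₁ e = 1 ∧ lam₂ e = 1) v = 1)).card : ℚ)
        * ((k:ℚ)/4) = 2 * (q:ℚ) := by
    rcases Finset.eq_empty_or_nonempty (Finset.univ.filter
        (fun v => cntP s t (fun e => lam₁ e = 1 ∧ lam₂ e = 1) v = 1)) with hBe | ⟨v, hv⟩
    · exact ⟨0, by rw [hBe]; simp⟩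
    · have hcc := (Finset.mem_filter.1 hv).2
      obtain ⟨hS, hv1, hv2, hd3⟩ := fourb_S s t hut hlam₁ hlam₂ hfix₁ hfix₂ hcc
      obtain ⟨mS, hmS⟩ := (hj.2.2 v hd3).1
      obtain ⟨e, he1, -⟩ := hv1
      obtain ⟨mk, hmk⟩ := half_k_int hj.1 hfix₁ he1
      have hmS' : (mS : ℚ) = 3 * ((k:ℚ)/4) := by rw [← hmS, hS]
      have hq : (k:ℚ)/4 = (mS:ℚ) - (mk:ℚ) := by linarith
      refine ⟨r * (mS - mk), ?_⟩
      rw [hq, hr]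
      push_cast
      ring
  obtain ⟨q, hq⟩ := hBval
  refine ⟨C1 + C2 - C12 - q - M, ?_⟩
  rw [hE1, hE2, hE12, hC1, hC2, hC12]
  push_cast
  linarith [hcombine, hM, hBsum, hq]
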